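/- Let a, b be positive reals with a/b irrational. Then in ℝ⁴, the box a×a×a×b cannot be partitioned into finitely many boxes of type x×x×y×y (two pairs of equal side lengths, up to permutation of coordinates). -/

import Mathlib

/-- An axis-parallel box in ℝⁿ with positive side lengths. -/
structure Box (n : ℕ) where
  lower : Fin n → ℝ
  upper : Fin n → ℝ
  lower_lt_upper : ∀ i, lower i < upper i

namespace Box

/-- The closed box as a subset of ℝⁿ. -/
def toSet {n : ℕ} (B : Box n) : Set (Fin n → ℝ) :=
  Set.univ.pi fun i => Set.Icc (B.lower i) (B.upper i)

/-- The open interior of the box. -/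
def interiorSet {n : ℕ} (B : Box n) : Set (Fin n → ℝ) :=
  Set.univ.pi fun i => Set.Ioo (B.lower i) (B.upper i)

/-- The side length of the box in direction `i`. -/
def side {n : ℕ} (B : Box n) (i : Fin n) : ℝ := B.upper i - B.lower i

end Box

/-- The boxes `t` form a finite partition (dissection) of `B`:
pairwise disjoint interiors, and their union covers `B`. -/
def IsDissection {n m : ℕ} (B : Box n) (t : Fin m → Box n) : Prop :=
  (∀ i j, i ≠ j → Disjoint (t i).interiorSet (t j).interiorSet) ∧
  (⋃ i, (t i).toSet) = B.toSet

/-- `P` is cut by a hyperplane parallel to a pair of its faces into `P₁` and `P₂`. -/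
def IsSplit {n : ℕ} (P P₁ P₂ : Box n) : Prop :=
  ∃ (j : Fin n) (c : ℝ), P.lower j < c ∧ c < P.upper j ∧
    P₁.lower = P.lower ∧ P₁.upper = Function.update P.upper j c ∧
    P₂.lower = Function.update P.lower j c ∧ P₂.upper = P.upper

/-- A ℚ-linear functional on ℝ taking prescribed values on `a` and `b`. -/
lemma exists_qlinear (a b : ℝ) (ha : a ≠ 0) (hb : b ≠ 0) (hirr : Irrational (a / b)) :
    ∃ f : ℝ →ₗ[ℚ] ℝ, f a = 1 ∧ f b = -1 := by
  classical
  have hab : a ≠ b := by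
    rintro rfl
    exact hirr ⟨1, by rw [div_self hb]; norm_num⟩
  have hli : LinearIndependent ℚ ![a, b] := by
    rw [LinearIndependent.pair_iff' ha]
    intro q hq
    have hq0 : (q : ℝ) ≠ 0 := by
      intro h
      apply hb
      rw [← hq, Rat.smul_def, h, zero_mul]
    apply hirr
    refine ⟨q⁻¹, ?_⟩
    rw [← hq, Rat.smul_def]
    push_cast
    field_simp
  have hli' : LinearIndepOn ℚ id (Set.range ![a, b]) :=
    (linearIndepOn_id_range_iff hli.injective).mpr hli
  set s : Set ℝ := Set.range ![a, b] with hs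
  let bs := Module.Basis.extend hli'
  let g : hli'.extend (Set.subset_univ s) → ℝ := fun i =>
    if (i : ℝ) = a then 1 else if (i : ℝ) = b then -1 else 0
  refine ⟨bs.constr ℚ g, ?_, ?_⟩
  · have haM : a ∈ hli'.extend (Set.subset_univ s) :=
      hli'.subset_extend _ ⟨0, rfl⟩
    have : bs ⟨a, haM⟩ = a := Module.Basis.extend_apply_self hli' _
    rw [← this, Module.Basis.constr_basis]
    simp [g]
  · have hbM : b ∈ hli'.extend (Set.subset_univ s) :=
      hli'.subset_extend _ ⟨1, rfl⟩
    have : bs ⟨b, hbM⟩ = b := Module.Basis.extend_apply_self hli' _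
    rw [← this, Module.Basis.constr_basis]
    simp [g, hab.symm]

/-- If `a / b` is irrational, the 4-dimensional box `a × a × a × b` cannot be
partitioned into boxes of type `x × x × y × y` (up to permutation of coordinates). -/
theorem aaab_not_into_xxyy (a b : ℝ) (ha : 0 < a) (hb : 0 < b)
    (hirr : Irrational (a / b)) :
    ∀ B : Box 4, B.side = ![a, a, a, b] →
      ¬ ∃ (m : ℕ) (t : Fin m → Box 4), IsDissection B t ∧
        ∀ i, ∃ (σ : Equiv.Perm (Fin 4)) (x y : ℝ),
          (t i).side = ![x, x, y, y] ∘ σ := by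
  classical
  intro B hside
  rintro ⟨m, t, ⟨hdisj, hcover⟩, hshape⟩
  obtain ⟨f, hfa, hfb⟩ := exists_qlinear a b (ne_of_gt ha) (ne_of_gt hb) hirr
  -- convert to BoxIntegral boxes
  set I : BoxIntegral.Box (Fin 4) := ⟨B.lower, B.upper, B.lower_lt_upper⟩ with hI
  set J : Fin m → BoxIntegral.Box (Fin 4) :=
    fun i => ⟨(t i).lower, (t i).upper, (t i).lower_lt_upper⟩ with hJ
  -- pieces are inside B
  have hsub : ∀ i, (t i).toSet ⊆ B.toSet := by
    intro i
    rw [← hcover]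
    exact Set.subset_iUnion (fun i => (t i).toSet) i
  have hmemself : ∀ (P : Box 4), P.lower ∈ P.toSet ∧ P.upper ∈ P.toSet := by
    intro P
    constructor <;> intro k _ <;>
      exact ⟨by simp [le_refl, (P.lower_lt_upper k).le], by simp [le_refl, (P.lower_lt_upper k).le]⟩
  have hlow : ∀ i k, B.lower k ≤ (t i).lower k := by
    intro i k
    have := hsub i (hmemself (t i)).1 k (Set.mem_univ k)
    exact this.1
  have hup : ∀ i k, (t i).upper k ≤ B.upper k := by
    intro i k
    have := hsub i (hmemself (t i)).2 k (Set.mem_univ k)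
    exact this.2
  -- disjointness of the Ioc-boxes
  have hdisjIoc : ∀ i j, i ≠ j → Disjoint ((J i : Set (Fin 4 → ℝ))) (J j) := by
    intro i j hij
    rw [Set.disjoint_left]
    rintro x hxi hxj
    have hxi' : ∀ k, x k ∈ Set.Ioc ((t i).lower k) ((t i).upper k) := hxi
    have hxj' : ∀ k, x k ∈ Set.Ioc ((t j).lower k) ((t j).upper k) := hxj
    set ε : ℝ := (Finset.univ.inf' Finset.univ_nonempty
      fun k => min (x k - (t i).lower k) (x k - (t j).lower k)) / 2 with hε
    have hinfpos : 0 < Finset.univ.inf' Finset.univ_nonempty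
        (fun k => min (x k - (t i).lower k) (x k - (t j).lower k)) := by
      rw [Finset.lt_inf'_iff]
      intro k _
      exact lt_min (by linarith [(hxi' k).1]) (by linarith [(hxj' k).1])
    have hεpos : 0 < ε := by positivity
    have hεlt : ∀ k, ε < min (x k - (t i).lower k) (x k - (t j).lower k) := by
      intro k
      have h1 := Finset.inf'_le (b := k)
        (fun k => min (x k - (t i).lower k) (x k - (t j).lower k)) (Finset.mem_univ k)
      rw [hε]
      linarith
    have hyi : (fun k => x k - ε) ∈ (t i).interiorSet := by
      intro k _
      have := hεlt k
      rw [lt_min_iff] at this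
      exact ⟨show (t i).lower k < x k - ε by linarith [this.1],
             show x k - ε < (t i).upper k by linarith [(hxi' k).2]⟩
    have hyj : (fun k => x k - ε) ∈ (t j).interiorSet := by
      intro k _
      have := hεlt k
      rw [lt_min_iff] at this
      exact ⟨show (t j).lower k < x k - ε by linarith [this.2],
             show x k - ε < (t j).upper k by linarith [(hxj' k).2]⟩
    exact Set.disjoint_left.1 (hdisj i j hij) hyi hyj
  -- covering of the Ioc-box of B
  have hπcov : ∀ x, x ∈ I → ∃ i, x ∈ J i := by
    intro x hx
    have hx' : ∀ k, x k ∈ Set.Ioc (B.lower k) (B.upper k) := hx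
    set δ : ℝ := Finset.univ.inf' Finset.univ_nonempty (fun k => x k - B.lower k) with hδ
    have hδpos : 0 < δ := by
      rw [hδ, Finset.lt_inf'_iff]
      intro k _
      linarith [(hx' k).1]
    have hδle : ∀ k, δ ≤ x k - B.lower k := fun k =>
      Finset.inf'_le (fun k => x k - B.lower k) (Finset.mem_univ k)
    have hyB : ∀ n : ℕ, (fun k => x k - δ / (n + 1)) ∈ B.toSet := by
      intro n k _
      have h1 : 0 < δ / (n + 1 : ℝ) := by positivity
      have h2 : δ / (n + 1 : ℝ) ≤ δ := by
        apply div_le_self hδpos.le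
        exact le_add_of_nonneg_left (Nat.cast_nonneg n)
      exact ⟨by linarith [hδle k], by linarith [(hx' k).2]⟩
    have hyU : ∀ n : ℕ, ∃ i, (fun k => x k - δ / (n + 1)) ∈ (t i).toSet := by
      intro n
      have := hyB n
      rw [← hcover] at this
      exact Set.mem_iUnion.1 this
    choose g hg using hyU
    obtain ⟨i, hi⟩ := Finite.exists_infinite_fiber g
    have hiInf : (g ⁻¹' {i}).Infinite := Set.infinite_coe_iff.1 hi
    obtain ⟨n₀, hn₀⟩ := hiInf.nonempty
    refine ⟨i, fun k => ?_⟩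
    constructor
    · have := hg n₀ k (Set.mem_univ k)
      rw [Set.mem_preimage, Set.mem_singleton_iff] at hn₀
      rw [hn₀] at this
      have h1 : 0 < δ / (n₀ + 1 : ℝ) := by positivity
      have := this.1
      simp only at this
      linarith
    · apply le_of_forall_pos_le_add
      intro e he
      obtain ⟨N, hN⟩ := exists_nat_gt (δ / e)
      obtain ⟨n, hn, hnN⟩ := hiInf.exists_gt N
      rw [Set.mem_preimage, Set.mem_singleton_iff] at hn
      have hmem := hg n k (Set.mem_univ k)
      rw [hn] at hmem
      have h2 := hmem.2
      simp only at h2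
      have hlt : δ / (n + 1 : ℝ) < e := by
        rw [div_lt_iff₀ (by positivity)]
        have hNn : (N : ℝ) < n + 1 := by
          have : (N : ℝ) ≤ n := Nat.cast_le.2 hnN.le
          linarith
        have : δ / e < (N : ℝ) := hN
        rw [div_lt_iff₀ he] at this
        nlinarith
      linarith
  -- injectivity of J
  have hJinj : ∀ i j, J i = J j → i = j := by
    intro i j hJij
    by_contra hij
    have hl : (t i).lower = (t j).lower := congrArg BoxIntegral.Box.lower hJij
    have hu : (t i).upper = (t j).upper := congrArg BoxIntegral.Box.upper hJij
    have hint : (t i).interiorSet = (t j).interiorSet := by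
      unfold Box.interiorSet
      rw [hl, hu]
    have hc : (fun k => ((t i).lower k + (t i).upper k) / 2) ∈ (t i).interiorSet := by
      intro k _
      constructor <;> · have := (t i).lower_lt_upper k; simp only; linarith
    exact Set.disjoint_left.1 (hdisj i j hij) hc (hint ▸ hc)
  -- the prepartition
  set π : BoxIntegral.Prepartition I :=
    ⟨Finset.image J Finset.univ,
     by
       intro K hK
       obtain ⟨i, _, rfl⟩ := Finset.mem_image.1 hK
       rw [BoxIntegral.Box.le_iff_bounds]
       exact ⟨fun k => hlow i k, fun k => hup i k⟩,
     by
       intro K1 h1 K2 h2 hne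
       obtain ⟨i, _, rfl⟩ := Finset.mem_image.1 h1
       obtain ⟨j, _, rfl⟩ := Finset.mem_image.1 h2
       have hij : i ≠ j := fun h => hne (by rw [h])
       exact hdisjIoc i j hij⟩ with hπ
  have hπpart : π.IsPartition := by
    intro x hx
    obtain ⟨i, hi⟩ := hπcov x hx
    exact ⟨J i, Finset.mem_image.2 ⟨i, Finset.mem_univ i, rfl⟩, hi⟩
  -- the additive box function
  set μ : BoxIntegral.Box (Fin 4) → ℝ := fun K => ∏ k, f (K.upper k - K.lower k) with hμ
  have hsplit : ∀ (K : BoxIntegral.Box (Fin 4)), (K : WithTop (BoxIntegral.Box (Fin 4))) ≤ ⊤ →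
      ∀ {k : Fin 4} {c : ℝ}, c ∈ Set.Ioo (K.lower k) (K.upper k) →
      (K.splitLower k c).elim' 0 μ + (K.splitUpper k c).elim' 0 μ = μ K := by
    intro K _ k c hc
    rw [BoxIntegral.Box.splitLower_def hc, BoxIntegral.Box.splitUpper_def hc]
    show μ _ + μ _ = μ K
    have hL : (fun j => f (Function.update K.upper k c j - K.lower j)) =
        Function.update (fun j => f (K.upper j - K.lower j)) k (f (c - K.lower k)) := by
      funext j
      rcases eq_or_ne j k with rfl | hjk
      · simp
      · simp [Function.update_of_ne hjk]
    have hU : (fun j => f (K.upper j - Function.update K.lower k c j)) =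
        Function.update (fun j => f (K.upper j - K.lower j)) k (f (K.upper k - c)) := by
      funext j
      rcases eq_or_ne j k with rfl | hjk
      · simp
      · simp [Function.update_of_ne hjk]
    simp only [hμ]
    rw [show (∏ j, f (Function.update K.upper k c j - K.lower j)) =
        ∏ j, Function.update (fun j => f (K.upper j - K.lower j)) k (f (c - K.lower k)) j from by
          rw [hL]]
    rw [show (∏ j, f (K.upper j - Function.update K.lower k c j)) =
        ∏ j, Function.update (fun j => f (K.upper j - K.lower j)) k (f (K.upper k - c)) j from by
          rw [hU]]
    have hadd : f (c - K.lower k) + f (K.upper k - c) = f (K.upper k - K.lower k) := by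
      rw [← map_add]
      congr 1
      ring
    rw [Finset.prod_update_of_mem (Finset.mem_univ k),
        Finset.prod_update_of_mem (Finset.mem_univ k),
        ← add_mul, hadd]
    exact (Finset.prod_eq_mul_prod_diff_singleton_of_mem (Finset.mem_univ k)
      (fun j => f (K.upper j - K.lower j))).symm
  set μA : BoxIntegral.BoxAdditiveMap (Fin 4) ℝ ⊤ :=
    BoxIntegral.BoxAdditiveMap.ofMapSplitAdd μ ⊤ hsplit with hμA
  have hμAapp : ∀ K, μA K = μ K := fun K => rfl
  have hsum : ∑ K ∈ π.boxes, μ K = μ I := by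
    have := μA.sum_partition_boxes le_top hπpart
    simpa [hμAapp] using this
  have hsum' : ∑ i, μ (J i) = μ I := by
    rw [← hsum, hπ]
    rw [Finset.sum_image (fun i _ j _ h => hJinj i j h)]
  -- value on the big box
  have hμI : μ I = -1 := by
    have hBside : ∀ k, B.upper k - B.lower k = ![a, a, a, b] k := fun k => congrFun hside k
    simp only [hμ, hI]
    rw [Fin.prod_univ_four]
    rw [hBside 0, hBside 1, hBside 2, hBside 3]
    simp [hfa, hfb]
  -- value on each piece
  have hμJ : ∀ i, 0 ≤ μ (J i) := by
    intro i
    obtain ⟨σ, x, y, hσ⟩ := hshape i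
    have hTs : ∀ k, (t i).upper k - (t i).lower k = ![x, x, y, y] (σ k) := fun k =>
      congrFun hσ k
    have : μ (J i) = ∏ k, f (![x, x, y, y] (σ k)) := by
      simp only [hμ, hJ]
      exact Finset.prod_congr rfl fun k _ => by rw [hTs k]
    rw [this, Equiv.prod_comp σ (fun k => f (![x, x, y, y] k)), Fin.prod_univ_four]
    have h4 : f (![x, x, y, y] 0) * f (![x, x, y, y] 1) * f (![x, x, y, y] 2) *
        f (![x, x, y, y] 3) = (f x * f y) ^ 2 := by
      simp [Matrix.cons_val_zero, Matrix.cons_val_one]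
      ring
    rw [h4]
    exact sq_nonneg _
  have hge : (0 : ℝ) ≤ μ I := by
    rw [← hsum']
    exact Finset.sum_nonneg fun i _ => hμJ i
  rw [hμI] at hge
  linarith
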